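/- Let S and T be Hilbert spaces and c : S × T → ℝ a bounded bilinear form satisfying the inf-sup condition: there exists β > 0 such that for all t ∈ T, sup over nonzero s ∈ S of c(s,t)/‖s‖ ≥ β‖t‖. Then for every bounded linear functional ξ ∈ T*, there exists s ∈ S with c(s,t) = ξ(t) for all t ∈ T and ‖s‖_S ≤ β⁻¹‖ξ‖_{T*}. -/
import Mathlib

open InnerProductSpace

/-- Inf-sup condition implies existence of a bounded right inverse:
for every bounded functional `ξ` on `T` there is `s ∈ S` with `c s · = ξ` and
`‖s‖ ≤ β⁻¹ ‖ξ‖`. -/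
theorem stmt0
    {S T : Type*} [NormedAddCommGroup S] [InnerProductSpace ℝ S] [CompleteSpace S]
    [NormedAddCommGroup T] [InnerProductSpace ℝ T] [CompleteSpace T]
    (c : S →L[ℝ] T →L[ℝ] ℝ) (β : ℝ) (hβ : 0 < β)
    (hinfsup : ∀ t : T, β * ‖t‖ ≤ ⨆ s : {s : S // s ≠ 0}, c s.1 t / ‖s.1‖) :
    ∀ ξ : T →L[ℝ] ℝ, ∃ s : S, (∀ t : T, c s t = ξ t) ∧ ‖s‖ ≤ β⁻¹ * ‖ξ‖ := by
  intro ξ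
  -- Step 1: the inf-sup condition gives `β * ‖t‖ ≤ ‖c.flip t‖`.
  have hflip : ∀ t : T, β * ‖t‖ ≤ ‖c.flip t‖ := by
    intro t
    refine (hinfsup t).trans (Real.iSup_le ?_ (norm_nonneg _))
    rintro ⟨s, hs⟩
    have hs' : 0 < ‖s‖ := norm_pos_iff.mpr hs
    rw [div_le_iff₀ hs']
    calc c s t ≤ ‖(c.flip t) s‖ := le_abs_self _
      _ ≤ ‖c.flip t‖ * ‖s‖ := (c.flip t).le_opNorm s
  -- Step 2: define `A : T →ₗ[ℝ] S` by Riesz representation of `c.flip t`.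
  let A : T →ₗ[ℝ] S :=
    { toFun := fun t => (toDual ℝ S).symm (c.flip t)
      map_add' := by intro x y; simp
      map_smul' := by intro r x; simp }
  have hAinner : ∀ (t : T) (s : S), ⟪A t, s⟫_ℝ = c s t := by
    intro t s
    simp [A, toDual_symm_apply]
  have hAnorm : ∀ t : T, ‖A t‖ = ‖c.flip t‖ := by
    intro t
    exact (toDual ℝ S).symm.norm_map _
  have hlow : ∀ t : T, β * ‖t‖ ≤ ‖A t‖ := fun t => (hflip t).trans_eq (hAnorm t).symm
  have htle : ∀ t : T, ‖t‖ ≤ β⁻¹ * ‖A t‖ := by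
    intro t
    rw [le_inv_mul_iff₀ hβ]
    exact hlow t
  -- A is continuous
  have hAbound : ∀ t : T, ‖A t‖ ≤ ‖c.flip‖ * ‖t‖ := by
    intro t; rw [hAnorm]; exact c.flip.le_opNorm t
  let AC : T →L[ℝ] S := A.mkContinuous ‖c.flip‖ hAbound
  have hinj : Function.Injective A := by
    intro x y hxy
    have h : β * ‖x - y‖ ≤ ‖A (x - y)‖ := hlow _
    rw [map_sub, hxy, sub_self, norm_zero] at h
    have h2 : ‖x - y‖ = 0 := le_antisymm (by nlinarith [norm_nonneg (x - y)]) (norm_nonneg _)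
    exact sub_eq_zero.mp (norm_eq_zero.mp h2)
  -- Range of A is closed.
  have hanti : AntilipschitzWith (β⁻¹).toNNReal AC := by
    refine AddMonoidHomClass.antilipschitz_of_bound AC ?_
    intro t
    calc ‖t‖ ≤ β⁻¹ * ‖A t‖ := htle t
      _ = (β⁻¹).toNNReal * ‖AC t‖ := by
          rw [Real.coe_toNNReal _ (le_of_lt (inv_pos.mpr hβ))]; rfl
  have hclosed : IsClosed (Set.range AC) := hanti.isClosed_range AC.uniformContinuous
  set R : Submodule ℝ S := LinearMap.range A with hR
  have hRclosed : IsClosed (R : Set S) := by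
    have : (R : Set S) = Set.range AC := by
      ext x; simp [hR, LinearMap.mem_range]; rfl
    rw [this]; exact hclosed
  haveI : CompleteSpace R := hRclosed.completeSpace_coe
  -- Equivalence onto range
  let e : T ≃ₗ[ℝ] R := LinearEquiv.ofInjective A hinj
  have he : ∀ t : T, ((e t : R) : S) = A t := fun t => rfl
  -- the functional on R
  let f : R →ₗ[ℝ] ℝ := (ξ : T →ₗ[ℝ] ℝ).comp e.symm.toLinearMap
  have hfb : ∀ r : R, ‖f r‖ ≤ (β⁻¹ * ‖ξ‖) * ‖r‖ := by
    intro r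
    have hAr : A (e.symm r) = (r : S) := by
      rw [← he (e.symm r), e.apply_symm_apply]
    calc ‖f r‖ = ‖ξ (e.symm r)‖ := rfl
      _ ≤ ‖ξ‖ * ‖(e.symm r : T)‖ := ξ.le_opNorm _
      _ ≤ ‖ξ‖ * (β⁻¹ * ‖A (e.symm r)‖) :=
          mul_le_mul_of_nonneg_left (htle _) (norm_nonneg _)
      _ = (β⁻¹ * ‖ξ‖) * ‖r‖ := by rw [hAr]; ring_nf; rfl
  let F : R →L[ℝ] ℝ := f.mkContinuous (β⁻¹ * ‖ξ‖) hfb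
  have hFnorm : ‖F‖ ≤ β⁻¹ * ‖ξ‖ :=
    f.mkContinuous_norm_le (by positivity) hfb
  let s' : R := (toDual ℝ R).symm F
  refine ⟨(s' : S), ?_, ?_⟩
  · intro t
    have h1 : ⟪A t, (s' : S)⟫_ℝ = c ((s' : S)) t := hAinner t _
    have h2 : ⟪(e t : R), s'⟫_ℝ = F (e t) := by
      rw [real_inner_comm]; exact toDual_symm_apply
    have h3 : ⟪A t, (s' : S)⟫_ℝ = ⟪(e t : R), s'⟫_ℝ := by
      rw [Submodule.coe_inner, he]
    have h4 : F (e t) = ξ t := by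
      show f (e t) = ξ t
      simp [f]
    rw [← h1, h3, h2, h4]
  · calc ‖(s' : S)‖ = ‖s'‖ := rfl
      _ = ‖F‖ := (toDual ℝ R).symm.norm_map F
      _ ≤ β⁻¹ * ‖ξ‖ := hFnorm
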